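/- Let f : ℝ^D → ℝ be μ-strongly convex and have L_Lip-Lipschitz continuous gradient with 0 < μ ≤ L_Lip, and let f⋆ = min f. Then for any r ∈ ℝ^D, one gradient-descent-type step with noisy update r⁺ = r − (1/L_Lip)(∇f(r) + e) satisfies f(r⁺) − f⋆ ≤ (1 − μ/L_Lip)(f(r) − f⋆) + ‖e‖²/(2 L_Lip). -/

import Mathlib

lemma descent_lemma {D : ℕ} (f : EuclideanSpace ℝ (Fin D) → ℝ)
    (g : EuclideanSpace ℝ (Fin D) → EuclideanSpace ℝ (Fin D))
    (LL : ℝ) (hL : 0 < LL)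
    (hgrad : ∀ x, HasGradientAt f (g x) x)
    (hlip : ∀ x y, ‖g x - g y‖ ≤ LL * ‖x - y‖)
    (x v : EuclideanSpace ℝ (Fin D)) :
    f (x + v) ≤ f x + inner ℝ (g x) v + LL / 2 * ‖v‖ ^ 2 := by
  set φ : ℝ → ℝ := fun t => f (x + t • v) - t * inner ℝ (g x) v - LL * t ^ 2 / 2 * ‖v‖ ^ 2 with hφ
  have hderiv : ∀ t : ℝ, HasDerivAt φ
      ((inner ℝ (g (x + t • v)) v : ℝ) - inner ℝ (g x) v - LL * t * ‖v‖ ^ 2) t := by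
    intro t
    have h1 : HasDerivAt (fun t : ℝ => x + t • v) v t := by
      simpa using ((hasDerivAt_id t).smul_const v).const_add x
    have h2 := (hgrad (x + t • v)).hasFDerivAt.comp_hasDerivAt t h1
    have h2' : HasDerivAt (fun t : ℝ => f (x + t • v)) (inner ℝ (g (x + t • v)) v : ℝ) t := by
      have h2s := h2
      simp [InnerProductSpace.toDual_apply_apply] at h2s
      exact h2s
    have h3 : HasDerivAt (fun t : ℝ => t * (inner ℝ (g x) v : ℝ)) (inner ℝ (g x) v : ℝ) t := by
      simpa using (hasDerivAt_id t).mul_const (inner ℝ (g x) v : ℝ)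
    have h4 : HasDerivAt (fun t : ℝ => LL * t ^ 2 / 2 * ‖v‖ ^ 2) (LL * t * ‖v‖ ^ 2) t := by
      have hp : HasDerivAt (fun t : ℝ => t ^ 2) (2 * t) t := by
        simpa using hasDerivAt_pow 2 t
      have := ((hp.const_mul LL).div_const 2).mul_const (‖v‖ ^ 2)
      exact this.congr_deriv (by ring)
    exact (h2'.sub h3).sub h4
  have hanti : AntitoneOn φ (Set.Icc 0 1) := by
    apply antitoneOn_of_deriv_nonpos (convex_Icc 0 1)
    · exact fun t _ => ((hderiv t).continuousAt).continuousWithinAt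
    · intro t ht
      exact ((hderiv t).differentiableAt).differentiableWithinAt
    · intro t ht
      rw [interior_Icc] at ht
      rw [(hderiv t).deriv]
      have h5 : (inner ℝ (g (x + t • v)) v : ℝ) - inner ℝ (g x) v
          = inner ℝ (g (x + t • v) - g x) v := by rw [inner_sub_left]
      have key : (inner ℝ (g (x + t • v)) v : ℝ) - inner ℝ (g x) v ≤ LL * t * ‖v‖ ^ 2 := by
        rw [h5]
        calc (inner ℝ (g (x + t • v) - g x) v : ℝ) ≤ ‖g (x + t • v) - g x‖ * ‖v‖ :=
              real_inner_le_norm _ _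
          _ ≤ (LL * ‖(x + t • v) - x‖) * ‖v‖ :=
              mul_le_mul_of_nonneg_right (hlip _ _) (norm_nonneg _)
          _ = LL * t * ‖v‖ ^ 2 := by
              simp [norm_smul, abs_of_pos ht.1]; ring
      linarith
  have h01 := hanti (Set.left_mem_Icc.2 zero_le_one) (Set.right_mem_Icc.2 zero_le_one) zero_le_one
  simp only [hφ, one_smul, zero_smul, add_zero, one_pow, mul_one, one_mul, zero_mul, mul_zero,
    zero_div, sub_zero, zero_pow, ne_eq, OfNat.ofNat_ne_zero, not_false_iff] at h01
  linarith

/-- One noisy gradient step on a `μ`-strongly convex function `f` with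
`L`-Lipschitz gradient: with `r⁺ = r − (1/L)(∇f(r) + e)`,
`f(r⁺) − f⋆ ≤ (1 − μ/L)(f(r) − f⋆) + ‖e‖²/(2L)`. -/
theorem stmt_15 {D : ℕ} (f : EuclideanSpace ℝ (Fin D) → ℝ)
    (g : EuclideanSpace ℝ (Fin D) → EuclideanSpace ℝ (Fin D))
    (μ LL : ℝ) (hμ : 0 < μ) (hμL : μ ≤ LL)
    (hgrad : ∀ x, HasGradientAt f (g x) x)
    (hstrong : ∀ x y, f x + inner ℝ (g x) (y - x) + μ / 2 * ‖y - x‖ ^ 2 ≤ f y)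
    (hlip : ∀ x y, ‖g x - g y‖ ≤ LL * ‖x - y‖)
    (fstar : ℝ) (hfstar : ∀ x, fstar ≤ f x)
    (hattained : ∃ x, f x = fstar)
    (r : EuclideanSpace ℝ (Fin D)) (e : EuclideanSpace ℝ (Fin D)) :
    f (r - (1 / LL) • (g r + e)) - fstar ≤
      (1 - μ / LL) * (f r - fstar) + ‖e‖ ^ 2 / (2 * LL) := by
  have hL : 0 < LL := lt_of_lt_of_le hμ hμL
  obtain ⟨xs, hxs⟩ := hattained
  -- PL-type inequality, division free
  have hμg : 2 * μ * (f r - fstar) ≤ ‖g r‖ ^ 2 := by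
    have h1 := hstrong r xs
    rw [hxs] at h1
    have h2 : 0 ≤ ‖μ • (xs - r) + g r‖ ^ 2 := sq_nonneg _
    rw [norm_add_sq_real] at h2
    have h3 : (inner ℝ (μ • (xs - r)) (g r) : ℝ) = μ * inner ℝ (g r) (xs - r) := by
      rw [real_inner_smul_left, real_inner_comm]
    have h4 : ‖μ • (xs - r)‖ ^ 2 = μ ^ 2 * ‖xs - r‖ ^ 2 := by
      rw [norm_smul]; simp [abs_of_pos hμ]; ring
    rw [h3, h4] at h2
    nlinarith [sq_nonneg ‖xs - r‖]
  -- descent step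
  have hv : r - (1 / LL) • (g r + e) = r + (-(1/LL)) • (g r + e) := by
    rw [neg_smul, sub_eq_add_neg]
  have hdes := descent_lemma f g LL hL hgrad hlip r ((-(1/LL)) • (g r + e))
  rw [← hv] at hdes
  have hin : (inner ℝ (g r) ((-(1/LL)) • (g r + e)) : ℝ)
      = -(1/LL) * (‖g r‖^2 + inner ℝ (g r) e) := by
    rw [real_inner_smul_right, inner_add_right, real_inner_self_eq_norm_sq]
  have hnv : ‖(-(1/LL)) • (g r + e)‖ ^ 2 = (1/LL)^2 * (‖g r‖^2 + 2 * inner ℝ (g r) e + ‖e‖^2) := by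
    rw [norm_smul, mul_pow, ← norm_add_sq_real]
    simp [abs_of_pos hL]
  rw [hin, hnv] at hdes
  have h6 : f r + -(1/LL) * (‖g r‖^2 + (inner ℝ (g r) e : ℝ))
      + LL / 2 * ((1/LL)^2 * (‖g r‖^2 + 2 * (inner ℝ (g r) e : ℝ) + ‖e‖^2))
      = f r - ‖g r‖^2 / (2*LL) + ‖e‖^2 / (2*LL) := by
    field_simp; ring
  have key : f (r - (1 / LL) • (g r + e)) ≤ f r - ‖g r‖^2/(2*LL) + ‖e‖^2/(2*LL) :=
    le_of_le_of_eq hdes h6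
  have hstep : μ / LL * (f r - fstar) ≤ ‖g r‖^2 / (2*LL) := by
    have h7 : μ / LL * (f r - fstar) = (2 * μ * (f r - fstar)) / (2*LL) := by
      field_simp
    rw [h7]
    exact div_le_div_of_nonneg_right hμg (by positivity) |>.trans_eq rfl
  have expand : (1 - μ / LL) * (f r - fstar) = (f r - fstar) - μ / LL * (f r - fstar) := by ring
  linarith [key, hstep]
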